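/- Let P ⊆ Q be index pairs for an isolated invariant set S in an isolating set N such that P₁ = Q₁ or P₂ = Q₂. Then there exist n ∈ ℕ and a sequence of index pairs for S in N, P = Qⁿ ⊆ Qⁿ⁻¹ ⊆ ⋯ ⊆ Q¹ ⊆ Q⁰ = Q, such that (a) for i ∈ {1,2}, if P_i = Q_i then Qᵏ_i = P_i = Q_i for all k = 1,…,n−1, and (b) F(Qᵏ_i) ∩ N ⊆ Qᵏ⁺¹_i for all k = 0,…,n−1 and i = 1,2. -/

import Mathlib

open Set

namespace MV

variable {X : Type*}

/-- The image of a set under a multivalued map `F : X → Set X`. -/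
def image (F : X → Set X) (A : Set X) : Set X := ⋃ x ∈ A, F x

/-- `F` is lower semicontinuous with closed values (characterization valid for
finite `T₀` spaces): each value is closed, and `x' ∈ cl {x}` implies `F x' ⊆ F x`. -/
def LscClosed [TopologicalSpace X] (F : X → Set X) : Prop :=
  (∀ x, IsClosed (F x)) ∧ ∀ x x' : X, x' ∈ closure {x} → F x' ⊆ F x

/-- `σ 0, σ 1, …, σ n` is a path in `A` (for `F`). -/
def IsPathIn (F : X → Set X) (A : Set X) (n : ℕ) (σ : ℕ → X) : Prop :=
  (∀ j ≤ n, σ j ∈ A) ∧ ∀ j < n, σ (j + 1) ∈ F (σ j)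

/-- `γ : ℤ → X` is a full solution in `A` (for `F`). -/
def IsFullSolution (F : X → Set X) (A : Set X) (γ : ℤ → X) : Prop :=
  (∀ i, γ i ∈ A) ∧ ∀ i, γ (i + 1) ∈ F (γ i)

/-- The invariant part `Inv(A)`: points of `A` lying on a full solution in `A`. -/
def invPart (F : X → Set X) (A : Set X) : Set X :=
  {x | ∃ γ, IsFullSolution F A γ ∧ ∃ i, γ i = x}

/-- `S` is invariant: every point of `S` lies on a full solution in `S`. -/
def IsInvariant (F : X → Set X) (S : Set X) : Prop :=
  ∀ x ∈ S, ∃ γ, IsFullSolution F S γ ∧ ∃ i, γ i = x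

/-- `N` is an isolating set for `S`: it is closed, every path in `N` with both
endpoints in `S` has all its values in `S` (IS1), and `S ∩ cl (F(S) \ N) = ∅` (IS2). -/
def IsIsolatingSet [TopologicalSpace X] (F : X → Set X) (S N : Set X) : Prop :=
  IsClosed N ∧
  (∀ n σ, IsPathIn F N n σ → σ 0 ∈ S → σ n ∈ S → ∀ j ≤ n, σ j ∈ S) ∧
  S ∩ closure (image F S \ N) = ∅

/-- `S` is an isolated invariant set: it is invariant and admits an isolating set. -/
def IsIsolatedInvariantSet [TopologicalSpace X] (F : X → Set X) (S : Set X) : Prop :=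
  IsInvariant F S ∧ ∃ N, IsIsolatingSet F S N

/-- `Inv⁻(N,S)`: points of `N` reachable from `S` by a path in `N`. -/
def invMinus (F : X → Set X) (N S : Set X) : Set X :=
  {y ∈ N | ∃ n σ, IsPathIn F N n σ ∧ σ 0 ∈ S ∧ σ n = y}

/-- `Inv⁺(N,S)`: points of `N` from which `S` is reachable by a path in `N`. -/
def invPlus (F : X → Set X) (N S : Set X) : Set X :=
  {y ∈ N | ∃ n σ, IsPathIn F N n σ ∧ σ 0 = y ∧ σ n ∈ S}

/-- `(P₁, P₂)` is an index pair for `S` in the isolating set `N`: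
closed sets `P₂ ⊆ P₁ ⊆ N` with (IP1) `F(Pᵢ) ∩ N ⊆ Pᵢ`,
(IP2) `P₁ ∩ cl (F(P₁) \ N) ⊆ P₂`, and (IP3) `S = Inv (P₁ \ P₂)`. -/
def IsIndexPair [TopologicalSpace X] (F : X → Set X) (S N P₁ P₂ : Set X) : Prop :=
  IsClosed P₁ ∧ IsClosed P₂ ∧ P₂ ⊆ P₁ ∧ P₁ ⊆ N ∧
  image F P₁ ∩ N ⊆ P₁ ∧ image F P₂ ∩ N ⊆ P₂ ∧
  P₁ ∩ closure (image F P₁ \ N) ⊆ P₂ ∧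
  S = invPart F (P₁ \ P₂)

/-- Reachability in the `F`-digraph: a directed path (possibly of length zero)
from `x` to `y`. -/
def Reach (F : X → Set X) (x y : X) : Prop :=
  ∃ n σ, IsPathIn F Set.univ n σ ∧ σ 0 = x ∧ σ n = y

/-- The strongly connected component of `x` in the `F`-digraph. -/
def scc (F : X → Set X) (x : X) : Set X :=
  {y | Reach F x y ∧ Reach F y x}

/-- `M` is a nontrivial strongly connected component of the `F`-digraph. -/
def IsNontrivialSCC (F : X → Set X) (M : Set X) : Prop :=
  (∃ x, M = scc F x) ∧ ¬∃ x, M = {x} ∧ x ∉ F x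

end MV

section MVAux

open MV Set

variable {X : Type*}

lemma MVAux.mem_image_iff (F : X → Set X) (A : Set X) (y : X) :
    y ∈ MV.image F A ↔ ∃ x ∈ A, y ∈ F x := by
  simp [MV.image]

lemma MVAux.image_mono (F : X → Set X) {A B : Set X} (h : A ⊆ B) :
    MV.image F A ⊆ MV.image F B := by
  intro y hy
  rw [MVAux.mem_image_iff] at *
  obtain ⟨x, hx, hyx⟩ := hy
  exact ⟨x, h hx, hyx⟩

lemma MVAux.image_union (F : X → Set X) (A B : Set X) :
    MV.image F (A ∪ B) = MV.image F A ∪ MV.image F B :=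
  Set.biUnion_union A B F

lemma MVAux.image_closed [TopologicalSpace X] [Finite X] {F : X → Set X}
    (hF : ∀ x, IsClosed (F x)) (A : Set X) : IsClosed (MV.image F A) :=
  (A.toFinite).isClosed_biUnion (fun x _ => hF x)

lemma MVAux.invPart_mono (F : X → Set X) {A B : Set X} (h : A ⊆ B) :
    MV.invPart F A ⊆ MV.invPart F B := by
  rintro x ⟨γ, ⟨hγA, hγF⟩, i, hi⟩
  exact ⟨γ, ⟨fun j => h (hγA j), hγF⟩, i, hi⟩

lemma MVAux.invPart_subset (F : X → Set X) (A : Set X) : MV.invPart F A ⊆ A := by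
  rintro x ⟨γ, ⟨hγA, _⟩, i, rfl⟩; exact hγA i

lemma MVAux.path_absorb (F : X → Set X) {N A T : Set X}
    (hA : MV.image F A ∩ N ⊆ A) (hTN : T ⊆ N) {n : ℕ} {σ : ℕ → X}
    (hσ : MV.IsPathIn F T n σ) (h0 : σ 0 ∈ A) : σ n ∈ A := by
  obtain ⟨hmem, hstep⟩ := hσ
  have key : ∀ j, j ≤ n → σ j ∈ A := by
    intro j
    induction j with
    | zero => intro _; exact h0
    | succ j ih =>
      intro hj
      apply hA
      refine ⟨?_, hTN (hmem (j+1) hj)⟩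
      rw [MVAux.mem_image_iff]
      exact ⟨σ j, ih (by omega), hstep j (by omega)⟩
  exact key n le_rfl

lemma MVAux.periodic_absorb (F : X → Set X) {N A T : Set X}
    (hA : MV.image F A ∩ N ⊆ A) (hTN : T ⊆ N) {γ : ℤ → X} {p : ℕ} (hp : 0 < p)
    (hγ : MV.IsFullSolution F T γ) (hper : ∀ m : ℤ, γ (m + p) = γ m)
    {m : ℤ} (hm : γ m ∈ A) : γ 0 ∈ A := by
  obtain ⟨hmem, hstep⟩ := hγ
  have fwd : ∀ k : ℕ, γ (m + k) ∈ A := by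
    intro k
    induction k with
    | zero => simpa using hm
    | succ k ih =>
      have : γ (m + k + 1) ∈ A := by
        apply hA
        refine ⟨?_, hTN (hmem _)⟩
        rw [MVAux.mem_image_iff]
        exact ⟨γ (m + k), ih, hstep (m + k)⟩
      have he : m + ((k : ℤ) + 1) = m + k + 1 := by ring
      rw [show ((k + 1 : ℕ) : ℤ) = (k : ℤ) + 1 by push_cast; ring, he]
      exact this
  have hperiter : ∀ (t : ℕ) (x : ℤ), γ (x + t * p) = γ x := by
    intro t
    induction t with
    | zero => intro x; simp
    | succ t ih =>
      intro x
      have h1 : x + ((t : ℤ) + 1) * p = (x + t * p) + p := by ring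
      have := hper (x + t * p)
      rw [show ((t + 1 : ℕ) : ℤ) = (t : ℤ) + 1 by push_cast; ring, h1, this]
      exact ih x
  set t : ℕ := m.toNat + 1 with ht
  have hmt : m ≤ (t : ℤ) * p := by
    have h1 : m ≤ (m.toNat : ℤ) + 1 := by omega
    have h2 : ((m.toNat : ℤ) + 1) * 1 ≤ ((m.toNat : ℤ) + 1) * p := by
      apply mul_le_mul_of_nonneg_left _ (by omega)
      exact_mod_cast hp
    rw [ht]
    push_cast
    omega
  set k : ℕ := ((t : ℤ) * p - m).toNat with hk
  have hmk : m + (k : ℤ) = (t : ℤ) * p := by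
    rw [hk, Int.toNat_of_nonneg (by omega)]; ring
  have := fwd k
  rw [hmk] at this
  have h0 : γ ((t : ℤ) * p) = γ 0 := by simpa using hperiter t 0
  rwa [h0] at this

lemma MVAux.exists_periodic [Finite X] (F : X → Set X) (T : Set X)
    (hT : ∀ y ∈ T, ∃ z ∈ T, y ∈ F z) {y : X} (hy : y ∈ T) :
    ∃ z, (∃ (γ : ℤ → X) (p : ℕ), 0 < p ∧ MV.IsFullSolution F T γ ∧ γ 0 = z ∧
        ∀ m : ℤ, γ (m + p) = γ m) ∧
      ∃ n σ, MV.IsPathIn F T n σ ∧ σ 0 = z ∧ σ n = y := by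
  classical
  let f : {x // x ∈ T} → {x // x ∈ T} :=
    fun x => ⟨(hT x.1 x.2).choose, (hT x.1 x.2).choose_spec.1⟩
  have hf : ∀ x : {x // x ∈ T}, (x : X) ∈ F (f x) := fun x => (hT x.1 x.2).choose_spec.2
  let β : ℕ → {x // x ∈ T} := fun k => f^[k] ⟨y, hy⟩
  have hβ : ∀ k, (β k : X) ∈ F (β (k + 1)) := by
    intro k
    have h : β (k + 1) = f (β k) := Function.iterate_succ_apply' f k _
    rw [h]; exact hf (β k)
  obtain ⟨i, j, hij, heq⟩ : ∃ i j, i < j ∧ β i = β j := by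
    obtain ⟨a, b, hne, he⟩ := Finite.exists_ne_map_eq_of_infinite β
    rcases lt_or_gt_of_ne hne with h | h
    · exact ⟨a, b, h, he⟩
    · exact ⟨b, a, h, he.symm⟩
  set p : ℕ := j - i with hpdef
  have hppos : 0 < p := by omega
  have hpz : (p : ℤ) ≠ 0 := by exact_mod_cast hppos.ne'
  have hpP : (0 : ℤ) < p := by exact_mod_cast hppos
  -- residues
  have hr0 : ∀ m : ℤ, 0 ≤ (-m) % (p : ℤ) := fun m => Int.emod_nonneg _ hpz
  have hrlt : ∀ m : ℤ, (-m) % (p : ℤ) < p := fun m => Int.emod_lt_of_pos _ hpP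
  have hstepmod : ∀ m : ℤ, (-(m + 1)) % (p : ℤ) =
      if (-m) % (p : ℤ) = 0 then (p : ℤ) - 1 else (-m) % (p : ℤ) - 1 := by
    intro m
    have hq := Int.mul_ediv_add_emod (-m) (p : ℤ)
    split_ifs with h
    · have he : -(m + 1) = ((p : ℤ) - 1) + (p : ℤ) * ((-m) / (p : ℤ) - 1) := by
        rw [mul_sub]; omega
      rw [he, Int.add_mul_emod_self_left]
      exact Int.emod_eq_of_lt (by omega) (by omega)
    · have h0 := hr0 m
      have hlt := hrlt m
      have he : -(m + 1) = ((-m) % (p : ℤ) - 1) + (p : ℤ) * ((-m) / (p : ℤ)) := by omega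
      rw [he, Int.add_mul_emod_self_left]
      exact Int.emod_eq_of_lt (by omega) (by omega)
  let e : ℤ → ℕ := fun m => i + ((-m) % (p : ℤ)).toNat
  let γ : ℤ → X := fun m => (β (e m) : X)
  have he0 : e 0 = i := by simp [e]
  have heper : ∀ m : ℤ, e (m + p) = e m := by
    intro m
    have : (-(m + p)) % (p : ℤ) = (-m) % (p : ℤ) := by
      have he : -(m + p) = -m + (p : ℤ) * (-1) := by ring
      rw [he, Int.add_mul_emod_self_left]
    simp only [e, this]
  have hestep : ∀ m : ℤ, γ (m + 1) ∈ F (γ m) := by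
    intro m
    by_cases h : (-m) % (p : ℤ) = 0
    · have h1 : e m = i := by simp [e, h]
      have h2 : e (m + 1) = i + (p - 1) := by
        have hs := hstepmod m
        rw [if_pos h] at hs
        simp only [e, hs]
        omega
      have hj1 : e (m + 1) + 1 = j := by omega
      have := hβ (e (m + 1))
      rw [hj1, ← heq, ← h1] at this
      exact this
    · have h2 : e (m + 1) + 1 = e m := by
        have hs := hstepmod m
        rw [if_neg h] at hs
        have h0 := hr0 m
        have hne : 1 ≤ (-m) % (p : ℤ) := by
          rcases lt_or_eq_of_le h0 with h' | h'
          · omega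
          · exact absurd h'.symm h
        simp only [e, hs]
        omega
      have := hβ (e (m + 1))
      rw [h2] at this
      exact this
  have hβ0 : (β 0 : X) = y := rfl
  refine ⟨(β i : X), ⟨γ, p, hppos, ⟨fun m => (β (e m)).2, hestep⟩, by simp [γ, he0], ?_⟩,
    i, fun j' => (β (i - j') : X), ⟨fun j' _ => (β (i - j')).2, ?_⟩, by simp,
    by show (β (i-i) : X) = y; rw [Nat.sub_self]; exact hβ0⟩
  · intro m; simp only [γ, heper]
  · intro j' hj'
    have h1 : i - j' = (i - (j' + 1)) + 1 := by omega
    have := hβ (i - (j' + 1))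
    rw [← h1] at this
    exact this

lemma MVAux.key_one [TopologicalSpace X] [Finite X]
    (F : X → Set X) (S N P₁ P₂ Q₁ Q₂ : Set X)
    (hP : MV.IsIndexPair F S N P₁ P₂) (hQ : MV.IsIndexPair F S N Q₁ Q₂)
    (hc : P₂ = Q₂) (T : Set X) (hTpred : T ⊆ MV.image F T ∩ N) (hTQ : T ⊆ Q₁) :
    T ⊆ P₁ := by
  obtain ⟨hPc₁, hPc₂, hP21, hP1N, hPIP1₁, hPIP1₂, hPIP2, hPIP3⟩ := hP
  obtain ⟨hQc₁, hQc₂, hQ21, hQ1N, hQIP1₁, hQIP1₂, hQIP2, hQIP3⟩ := hQ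
  have hTN : T ⊆ N := fun x hx => (hTpred hx).2
  have hT' : ∀ y ∈ T, ∃ z ∈ T, y ∈ F z := by
    intro y hy
    have := (hTpred hy).1
    rwa [MVAux.mem_image_iff] at this
  intro y hy
  obtain ⟨z, ⟨γ, p, hp, hγ, hγ0, hper⟩, n, σ, hσ, hσ0, hσn⟩ :=
    MVAux.exists_periodic F T hT' hy
  have hz : z ∈ P₁ := by
    by_cases hm : ∃ m, γ m ∈ Q₂
    · obtain ⟨m, hm⟩ := hm
      have : γ 0 ∈ Q₂ := MVAux.periodic_absorb F hQIP1₂ hTN hp hγ hper hm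
      rw [hγ0] at this
      exact hP21 (hc ▸ this)
    · push_neg at hm
      have hsol : MV.IsFullSolution F (Q₁ \ Q₂) γ :=
        ⟨fun i => ⟨hTQ (hγ.1 i), hm i⟩, hγ.2⟩
      have hzS : z ∈ S := by
        rw [hQIP3]; exact ⟨γ, hsol, 0, hγ0⟩
      have := MVAux.invPart_subset F (P₁ \ P₂) (hPIP3 ▸ hzS)
      exact this.1
  rw [← hσn]
  exact MVAux.path_absorb F hPIP1₁ hTN hσ (hσ0 ▸ hz)

lemma MVAux.key_two [TopologicalSpace X] [Finite X]
    (F : X → Set X) (S N P₁ P₂ Q₁ Q₂ : Set X)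
    (hP : MV.IsIndexPair F S N P₁ P₂) (hQ : MV.IsIndexPair F S N Q₁ Q₂)
    (hc : P₁ = Q₁) (T : Set X) (hTpred : T ⊆ MV.image F T ∩ N) (hTQ : T ⊆ Q₂) :
    T ⊆ P₂ := by
  obtain ⟨hPc₁, hPc₂, hP21, hP1N, hPIP1₁, hPIP1₂, hPIP2, hPIP3⟩ := hP
  obtain ⟨hQc₁, hQc₂, hQ21, hQ1N, hQIP1₁, hQIP1₂, hQIP2, hQIP3⟩ := hQ
  have hTN : T ⊆ N := fun x hx => (hTpred hx).2
  have hT' : ∀ y ∈ T, ∃ z ∈ T, y ∈ F z := by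
    intro y hy
    have := (hTpred hy).1
    rwa [MVAux.mem_image_iff] at this
  intro y hy
  obtain ⟨z, ⟨γ, p, hp, hγ, hγ0, hper⟩, n, σ, hσ, hσ0, hσn⟩ :=
    MVAux.exists_periodic F T hT' hy
  have hz : z ∈ P₂ := by
    by_cases hm : ∃ m, γ m ∈ P₂
    · obtain ⟨m, hm⟩ := hm
      have : γ 0 ∈ P₂ := MVAux.periodic_absorb F hPIP1₂ hTN hp hγ hper hm
      rwa [hγ0] at this
    · push_neg at hm
      have hsol : MV.IsFullSolution F (P₁ \ P₂) γ :=
        ⟨fun i => ⟨hc ▸ hQ21 (hTQ (hγ.1 i)), hm i⟩, hγ.2⟩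
      have hzS : z ∈ S := by
        rw [hPIP3]; exact ⟨γ, hsol, 0, hγ0⟩
      have := MVAux.invPart_subset F (Q₁ \ Q₂) (hQIP3 ▸ hzS)
      exact absurd (hTQ (hγ0 ▸ hγ.1 0)) this.2
  rw [← hσn]
  exact MVAux.path_absorb F hPIP1₂ hTN hσ (hσ0 ▸ hz)

end MVAux

/-- **Interpolating between nested index pairs.** If `P ⊆ Q` are index pairs for `S` in
`N` with `P₁ = Q₁` or `P₂ = Q₂`, then there is a decreasing sequence of index pairs
`P = Qⁿ ⊆ ⋯ ⊆ Q⁰ = Q` such that (a) if `Pᵢ = Qᵢ` then `Qᵏᵢ = Pᵢ = Qᵢ` for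
`k = 1, …, n-1`, and (b) `F(Qᵏᵢ) ∩ N ⊆ Qᵏ⁺¹ᵢ` for `k = 0, …, n-1` and `i = 1, 2`. -/
theorem interpolating_indexPairs {X : Type*} [TopologicalSpace X] [Finite X] [T0Space X]
    (F : X → Set X) (hF : MV.LscClosed F)
    (S N P₁ P₂ Q₁ Q₂ : Set X) (hS : MV.IsInvariant F S)
    (hN : MV.IsIsolatingSet F S N)
    (hP : MV.IsIndexPair F S N P₁ P₂) (hQ : MV.IsIndexPair F S N Q₁ Q₂)
    (h1 : P₁ ⊆ Q₁) (h2 : P₂ ⊆ Q₂) (h : P₁ = Q₁ ∨ P₂ = Q₂) :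
    ∃ (n : ℕ) (R₁ R₂ : ℕ → Set X),
      R₁ n = P₁ ∧ R₂ n = P₂ ∧ R₁ 0 = Q₁ ∧ R₂ 0 = Q₂ ∧
      (∀ k ≤ n, MV.IsIndexPair F S N (R₁ k) (R₂ k)) ∧
      (∀ k < n, R₁ (k + 1) ⊆ R₁ k ∧ R₂ (k + 1) ⊆ R₂ k) ∧
      (P₁ = Q₁ → ∀ k, 1 ≤ k → k ≤ n - 1 → R₁ k = P₁ ∧ R₁ k = Q₁) ∧
      (P₂ = Q₂ → ∀ k, 1 ≤ k → k ≤ n - 1 → R₂ k = P₂ ∧ R₂ k = Q₂) ∧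
      (∀ k < n, MV.image F (R₁ k) ∩ N ⊆ R₁ (k + 1) ∧
        MV.image F (R₂ k) ∩ N ⊆ R₂ (k + 1)) := by
  classical
  obtain hc | hc := h
  · -- Case 1 : P₁ = Q₁
    subst hc
    obtain ⟨hPc₁, hPc₂, hP21, hP1N, hPI1, hPI2, hPIP2, hPIP3⟩ := hP
    obtain ⟨hQc₁, hQc₂, hQ21, hQ1N, hQI1, hQI2, hQIP2, hQIP3⟩ := hQ
    set g : Set X → Set X := fun B => MV.image F B ∩ N with hgdef
    set A : ℕ → Set X := fun k => g^[k] Q₂ with hAdef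
    have hAsucc : ∀ k, A (k + 1) = g (A k) := fun k => Function.iterate_succ_apply' g k Q₂
    have hgA : ∀ k, MV.image F (A k) ∩ N ⊆ A (k + 1) := fun k => (hAsucc k).symm.subset
    have hAstep : ∀ k, A (k + 1) ⊆ A k := by
      intro k
      induction k with
      | zero =>
        rw [hAsucc 0]
        exact hQI2
      | succ k ih =>
        have ih' : g (A k) ⊆ A k := (hAsucc k) ▸ ih
        rw [hAsucc (k + 1), hAsucc k]
        intro x hx
        exact ⟨MVAux.image_mono F ih' hx.1, hx.2⟩
    have hAQ : ∀ k, A k ⊆ Q₂ := by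
      intro k
      induction k with
      | zero => exact subset_rfl
      | succ k ih => exact (hAstep k).trans ih
    have hAclosed : ∀ k, IsClosed (A k) := by
      intro k
      induction k with
      | zero => exact hQc₂
      | succ k _ =>
        rw [hAsucc k]
        exact (MVAux.image_closed hF.1 (A k)).inter hN.1
    obtain ⟨n, hn⟩ : ∃ n, A (n + 1) = A n := by
      by_contra hcon
      push_neg at hcon
      have hcard : ∀ k, (A k).ncard + k ≤ (A 0).ncard := by
        intro k
        induction k with
        | zero => simp
        | succ k ih =>
          have hss : A (k + 1) ⊂ A k := ssubset_of_subset_of_ne (hAstep k) (hcon k)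
          have := Set.ncard_lt_ncard hss (A k).toFinite
          omega
      have := hcard ((A 0).ncard + 1)
      omega
    have hTpred : A n ⊆ MV.image F (A n) ∩ N := ((hAsucc n).symm.trans hn).ge
    have hT : A n ⊆ P₂ :=
      MVAux.key_two F S N P₁ P₂ P₁ Q₂
        ⟨hPc₁, hPc₂, hP21, hP1N, hPI1, hPI2, hPIP2, hPIP3⟩
        ⟨hQc₁, hQc₂, hQ21, hQ1N, hQI1, hQI2, hQIP2, hQIP3⟩
        rfl (A n) hTpred (hAQ n)
    refine ⟨n, fun _ => P₁, fun k => P₂ ∪ A k, rfl, union_eq_left.mpr hT, rfl,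
      union_eq_right.mpr h2, ?_, fun k _ => ⟨subset_rfl, union_subset_union_right _ (hAstep k)⟩,
      fun _ k _ _ => ⟨rfl, rfl⟩, ?_, ?_⟩
    · -- index pairs
      intro k _
      refine ⟨hPc₁, hPc₂.union (hAclosed k), union_subset hP21 ((hAQ k).trans hQ21),
        hP1N, hPI1, ?_, hPIP2.trans subset_union_left, ?_⟩
      · rw [MVAux.image_union, union_inter_distrib_right]
        exact union_subset_union hPI2 ((hgA k).trans (hAstep k))
      · have hsub1 : P₁ \ Q₂ ⊆ P₁ \ (P₂ ∪ A k) :=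
          diff_subset_diff_right (union_subset h2 (hAQ k))
        have hsub2 : P₁ \ (P₂ ∪ A k) ⊆ P₁ \ P₂ :=
          diff_subset_diff_right subset_union_left
        refine Set.Subset.antisymm ?_ ?_
        · rw [hQIP3]
          exact MVAux.invPart_mono F hsub1
        · rw [hPIP3]
          exact MVAux.invPart_mono F hsub2
    · -- (a) for second component
      intro hpq k _ _
      have hAk : A k ⊆ P₂ := by rw [hpq]; exact hAQ k
      have he : P₂ ∪ A k = P₂ := union_eq_left.mpr hAk
      exact ⟨he, by show P₂ ∪ A k = Q₂; rw [he, hpq]⟩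
    · -- (b)
      intro k _
      refine ⟨hPI1, ?_⟩
      rw [MVAux.image_union, union_inter_distrib_right]
      exact union_subset_union hPI2 (hgA k)
  · -- Case 2 : P₂ = Q₂
    subst hc
    obtain ⟨hPc₁, hPc₂, hP21, hP1N, hPI1, hPI2, hPIP2, hPIP3⟩ := hP
    obtain ⟨hQc₁, hQc₂, hQ21, hQ1N, hQI1, hQI2, hQIP2, hQIP3⟩ := hQ
    set g : Set X → Set X := fun B => MV.image F B ∩ N with hgdef
    set A : ℕ → Set X := fun k => g^[k] Q₁ with hAdef
    have hAsucc : ∀ k, A (k + 1) = g (A k) := fun k => Function.iterate_succ_apply' g k Q₁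
    have hgA : ∀ k, MV.image F (A k) ∩ N ⊆ A (k + 1) := fun k => (hAsucc k).symm.subset
    have hAstep : ∀ k, A (k + 1) ⊆ A k := by
      intro k
      induction k with
      | zero =>
        rw [hAsucc 0]
        exact hQI1
      | succ k ih =>
        have ih' : g (A k) ⊆ A k := (hAsucc k) ▸ ih
        rw [hAsucc (k + 1), hAsucc k]
        intro x hx
        exact ⟨MVAux.image_mono F ih' hx.1, hx.2⟩
    have hAQ : ∀ k, A k ⊆ Q₁ := by
      intro k
      induction k with
      | zero => exact subset_rfl
      | succ k ih => exact (hAstep k).trans ih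
    have hAclosed : ∀ k, IsClosed (A k) := by
      intro k
      induction k with
      | zero => exact hQc₁
      | succ k _ =>
        rw [hAsucc k]
        exact (MVAux.image_closed hF.1 (A k)).inter hN.1
    obtain ⟨n, hn⟩ : ∃ n, A (n + 1) = A n := by
      by_contra hcon
      push_neg at hcon
      have hcard : ∀ k, (A k).ncard + k ≤ (A 0).ncard := by
        intro k
        induction k with
        | zero => simp
        | succ k ih =>
          have hss : A (k + 1) ⊂ A k := ssubset_of_subset_of_ne (hAstep k) (hcon k)
          have := Set.ncard_lt_ncard hss (A k).toFinite
          omega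
      have := hcard ((A 0).ncard + 1)
      omega
    have hTpred : A n ⊆ MV.image F (A n) ∩ N := ((hAsucc n).symm.trans hn).ge
    have hT : A n ⊆ P₁ :=
      MVAux.key_one F S N P₁ P₂ Q₁ P₂
        ⟨hPc₁, hPc₂, hP21, hP1N, hPI1, hPI2, hPIP2, hPIP3⟩
        ⟨hQc₁, hQc₂, hQ21, hQ1N, hQI1, hQI2, hQIP2, hQIP3⟩
        rfl (A n) hTpred (hAQ n)
    have hsubQ : ∀ k, P₁ ∪ A k ⊆ Q₁ := fun k => union_subset h1 (hAQ k)
    refine ⟨n, fun k => P₁ ∪ A k, fun _ => P₂, union_eq_left.mpr hT, rfl,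
      union_eq_right.mpr h1, rfl, ?_,
      fun k _ => ⟨union_subset_union_right _ (hAstep k), subset_rfl⟩, ?_,
      fun _ k _ _ => ⟨rfl, rfl⟩, ?_⟩
    · -- index pairs
      intro k _
      refine ⟨hPc₁.union (hAclosed k), hPc₂, hP21.trans subset_union_left,
        union_subset hP1N ((hAQ k).trans hQ1N), ?_, hPI2, ?_, ?_⟩
      · rw [MVAux.image_union, union_inter_distrib_right]
        exact union_subset_union hPI1 ((hgA k).trans (hAstep k))
      · have hmono : (P₁ ∪ A k) ∩ closure (MV.image F (P₁ ∪ A k) \ N) ⊆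
            Q₁ ∩ closure (MV.image F Q₁ \ N) :=
          inter_subset_inter (hsubQ k)
            (closure_mono (diff_subset_diff_left (MVAux.image_mono F (hsubQ k))))
        exact hmono.trans hQIP2
      · have hsub1 : P₁ \ P₂ ⊆ (P₁ ∪ A k) \ P₂ :=
          diff_subset_diff_left subset_union_left
        have hsub2 : (P₁ ∪ A k) \ P₂ ⊆ Q₁ \ P₂ :=
          diff_subset_diff_left (hsubQ k)
        refine Set.Subset.antisymm ?_ ?_
        · rw [hPIP3]
          exact MVAux.invPart_mono F hsub1
        · rw [hQIP3]
          exact MVAux.invPart_mono F hsub2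
    · -- (a) for first component
      intro hpq k _ _
      have hAk : A k ⊆ P₁ := by rw [hpq]; exact hAQ k
      have he : P₁ ∪ A k = P₁ := union_eq_left.mpr hAk
      exact ⟨he, by show P₁ ∪ A k = Q₁; rw [he, hpq]⟩
    · -- (b)
      intro k _
      refine ⟨?_, hPI2⟩
      rw [MVAux.image_union, union_inter_distrib_right]
      exact union_subset_union hPI1 (hgA k)
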